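/- Fix α ≥ 0 and L > 0. There exists a constant C = C(α, L) > 0 such that for all x₂ ≥ x₁ ≥ 0, y₂ ≥ y₁ ≥ 0 and t > 0 with x₂ y₂ ≤ L t², the 2×2 determinant q_t(x₁,y₁) q_t(x₂,y₂) − q_t(x₁,y₂) q_t(x₂,y₁) lies between C^{-1} t^{-2} q_t(x₁,y₂) q_t(x₂,y₁) (x₂−x₁)(y₂−y₁) and C t^{-2} q_t(x₁,y₂) q_t(x₂,y₁) (x₂−x₁)(y₂−y₁). -/

import Mathlib

/-- `h_α(z) = 2^{-α} ∑_{n≥0} (z/2)^{2n}/(n! Γ(n+α+1))`. -/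
noncomputable def hA (α z : ℝ) : ℝ :=
  (2 : ℝ) ^ (-α) * ∑' n : ℕ, (z / 2) ^ (2 * n) / ((n.factorial : ℝ) * Real.Gamma ((n : ℝ) + α + 1))

/-- The squared Bessel transition density of index `α`:
`q_t(x,y) = (1/2) t^{-α-1} y^α e^{-(x+y)/(2t)} h_α(√(xy)/t)`. -/
noncomputable def qK (α t x y : ℝ) : ℝ :=
  (1 / 2) * t ^ (-α - 1) * y ^ α * Real.exp (-(x + y) / (2 * t)) *
    hA α (Real.sqrt (x * y) / t)

open Real

noncomputable def cc (α : ℝ) (n : ℕ) : ℝ :=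
  (1/4 : ℝ)^n / ((n.factorial : ℝ) * Real.Gamma ((n : ℝ) + α + 1))

noncomputable def gg (α u : ℝ) : ℝ := ∑' n : ℕ, cc α n * u ^ n

lemma Gamma_arg_pos (α : ℝ) (hα : 0 ≤ α) (n : ℕ) : 0 < (n : ℝ) + α + 1 := by
  positivity

lemma cc_pos (α : ℝ) (hα : 0 ≤ α) (n : ℕ) : 0 < cc α n := by
  have h1 : 0 < Real.Gamma ((n : ℝ) + α + 1) :=
    Real.Gamma_pos_of_pos (Gamma_arg_pos α hα n)
  have h2 : (0:ℝ) < (n.factorial : ℝ) := by positivity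
  unfold cc; positivity

lemma Gamma_ge (α : ℝ) (hα : 0 ≤ α) (n : ℕ) :
    Real.Gamma (α + 1) ≤ Real.Gamma ((n : ℝ) + α + 1) := by
  induction n with
  | zero => simp
  | succ k ih =>
    have hk : ((k:ℝ) + α + 1) ≠ 0 := (Gamma_arg_pos α hα k).ne'
    have h0 : Real.Gamma (((k:ℝ) + α + 1) + 1) = ((k:ℝ) + α + 1) * Real.Gamma ((k:ℝ)+α+1) :=
      Real.Gamma_add_one hk
    have h1 : (1:ℝ) ≤ (k:ℝ) + α + 1 := by
      have : (0:ℝ) ≤ (k:ℝ) := Nat.cast_nonneg k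
      linarith
    have hg : 0 < Real.Gamma ((k:ℝ)+α+1) := Real.Gamma_pos_of_pos (Gamma_arg_pos α hα k)
    have e : ((k+1:ℕ):ℝ) + α + 1 = ((k:ℝ) + α + 1) + 1 := by push_cast; ring
    rw [e, h0]
    nlinarith

lemma cc_le (α : ℝ) (hα : 0 ≤ α) (n : ℕ) :
    cc α n ≤ (Real.Gamma (α+1))⁻¹ * ((1/4:ℝ)^n / (n.factorial : ℝ)) := by
  have hg0 : 0 < Real.Gamma (α+1) := Real.Gamma_pos_of_pos (by positivity)
  have hg : Real.Gamma (α + 1) ≤ Real.Gamma ((n : ℝ) + α + 1) := Gamma_ge α hα n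
  have h2 : (0:ℝ) < (n.factorial : ℝ) := by positivity
  have key : cc α n ≤ (1/4:ℝ)^n / ((n.factorial : ℝ) * Real.Gamma (α+1)) := by
    unfold cc
    apply div_le_div_of_nonneg_left (by positivity) (by positivity)
    exact mul_le_mul_of_nonneg_left hg h2.le
  calc cc α n ≤ (1/4:ℝ)^n / ((n.factorial : ℝ) * Real.Gamma (α+1)) := key
    _ = (Real.Gamma (α+1))⁻¹ * ((1/4:ℝ)^n / (n.factorial : ℝ)) := by
        field_simp

lemma summable_sq (α : ℝ) (hα : 0 ≤ α) (u : ℝ) (hu : 0 ≤ u) :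
    Summable (fun n : ℕ => ((n:ℝ))^2 * (cc α n * u ^ n)) := by
  have hg0 : 0 < Real.Gamma (α+1) := Real.Gamma_pos_of_pos (by positivity)
  have hb : Summable (fun n : ℕ => (Real.Gamma (α+1))⁻¹ * (u ^ n / (n.factorial : ℝ))) :=
    (Real.summable_pow_div_factorial u).mul_left _
  refine Summable.of_nonneg_of_le (fun n => by have := cc_pos α hα n; positivity) (fun n => ?_) hb
  have h1 : ((n:ℝ))^2 ≤ (4:ℝ)^n := by
    have h2 : ((n:ℝ)) ≤ (2:ℝ)^n := by exact_mod_cast (Nat.lt_two_pow_self (n := n)).le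
    calc ((n:ℝ))^2 ≤ ((2:ℝ)^n)^2 := by nlinarith [Nat.cast_nonneg (α := ℝ) n]
      _ = (4:ℝ)^n := by rw [← pow_mul, pow_mul']; norm_num
  have h3 : cc α n ≤ (Real.Gamma (α+1))⁻¹ * ((1/4:ℝ)^n / (n.factorial : ℝ)) := cc_le α hα n
  have hun : (0:ℝ) ≤ u^n := by positivity
  have h4 : (0:ℝ) < (n.factorial : ℝ) := by positivity
  calc ((n:ℝ))^2 * (cc α n * u^n)
      ≤ (4:ℝ)^n * (((Real.Gamma (α+1))⁻¹ * ((1/4:ℝ)^n / (n.factorial : ℝ))) * u^n) := by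
        have hc := cc_pos α hα n
        apply mul_le_mul h1 (mul_le_mul_of_nonneg_right h3 hun) (by positivity) (by positivity)
    _ = (Real.Gamma (α+1))⁻¹ * (u ^ n / (n.factorial : ℝ)) := by
        field_simp
        have h4' : (1/4:ℝ)^n * 4^n = 1 := by rw [← mul_pow]; norm_num
        linear_combination u^n * h4'

lemma summable_gg (α : ℝ) (hα : 0 ≤ α) (u : ℝ) (hu : 0 ≤ u) :
    Summable (fun n : ℕ => cc α n * u ^ n) := by
  have hg0 : 0 < Real.Gamma (α+1) := Real.Gamma_pos_of_pos (by positivity)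
  have hb : Summable (fun n : ℕ => (Real.Gamma (α+1))⁻¹ * (u ^ n / (n.factorial : ℝ))) :=
    (Real.summable_pow_div_factorial u).mul_left _
  refine Summable.of_nonneg_of_le (fun n => by have := cc_pos α hα n; positivity)
    (fun n => ?_) hb
  have h3 : cc α n ≤ (Real.Gamma (α+1))⁻¹ * ((1/4:ℝ)^n / (n.factorial : ℝ)) := cc_le α hα n
  have hun : (0:ℝ) ≤ u^n := by positivity
  have h4 : (0:ℝ) < (n.factorial : ℝ) := by positivity
  calc cc α n * u^n ≤ ((Real.Gamma (α+1))⁻¹ * ((1/4:ℝ)^n / (n.factorial : ℝ))) * u^n :=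
        mul_le_mul_of_nonneg_right h3 hun
    _ = (Real.Gamma (α+1))⁻¹ * (u ^ n / (n.factorial : ℝ)) * (1/4:ℝ)^n := by ring
    _ ≤ (Real.Gamma (α+1))⁻¹ * (u ^ n / (n.factorial : ℝ)) * 1 := by
        have h5 : (1/4:ℝ)^n ≤ 1 := pow_le_one₀ (by norm_num) (by norm_num)
        have h7 : (0:ℝ) ≤ (Real.Gamma (α+1))⁻¹ * (u ^ n / (n.factorial : ℝ)) := by positivity
        exact mul_le_mul_of_nonneg_left h5 h7
    _ = (Real.Gamma (α+1))⁻¹ * (u ^ n / (n.factorial : ℝ)) := by ring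

lemma summable_n (α : ℝ) (hα : 0 ≤ α) (u : ℝ) (hu : 0 ≤ u) :
    Summable (fun n : ℕ => ((n:ℝ)) * (cc α n * u ^ n)) := by
  refine Summable.of_nonneg_of_le (fun n => by have := cc_pos α hα n; positivity)
    (fun n => ?_) ((summable_sq α hα u hu).add (summable_gg α hα u hu))
  have hc := cc_pos α hα n
  have hun : (0:ℝ) ≤ u^n := by positivity
  have : ((n:ℝ)) ≤ ((n:ℝ))^2 + 1 := by nlinarith [Nat.cast_nonneg (α := ℝ) n]
  nlinarith [mul_le_mul_of_nonneg_right this (mul_nonneg hc.le hun)]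

lemma gg_ge_c0 (α : ℝ) (hα : 0 ≤ α) (u : ℝ) (hu : 0 ≤ u) : cc α 0 ≤ gg α u := by
  have h := Summable.le_tsum (summable_gg α hα u hu) 0
    (fun j _ => by have := cc_pos α hα j; positivity)
  simpa [gg] using h

lemma gg_pos (α : ℝ) (hα : 0 ≤ α) (u : ℝ) (hu : 0 ≤ u) : 0 < gg α u :=
  lt_of_lt_of_le (cc_pos α hα 0) (gg_ge_c0 α hα u hu)

lemma gg_mono (α : ℝ) (hα : 0 ≤ α) {u v : ℝ} (hu : 0 ≤ u) (huv : u ≤ v) :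
    gg α u ≤ gg α v := by
  apply Summable.tsum_le_tsum _ (summable_gg α hα u hu) (summable_gg α hα v (hu.trans huv))
  intro n
  have := cc_pos α hα n
  exact mul_le_mul_of_nonneg_left (pow_le_pow_left₀ hu huv n) this.le

lemma hA_eq (α z : ℝ) : hA α z = (2:ℝ)^(-α) * gg α (z^2) := by
  unfold hA gg
  congr 1
  apply tsum_congr
  intro n
  rw [cc]
  rw [pow_mul]
  have : (z/2)^2 = (z^2) * (1/4 : ℝ) := by ring
  rw [this, mul_pow]
  ring

lemma qK_eq (α t x y : ℝ) (hx : 0 ≤ x) (hy : 0 ≤ y) (ht : 0 < t) :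
    qK α t x y = (1 / 2) * t ^ (-α - 1) * y ^ α * Real.exp (-(x + y) / (2 * t)) *
      ((2:ℝ)^(-α) * gg α ((x/t) * (y/t))) := by
  unfold qK
  rw [hA_eq]
  congr 3
  rw [div_pow, Real.sq_sqrt (by positivity), div_mul_div_comm, pow_two]

lemma pow_sub_pow_le (p q : ℝ) (hp : 0 ≤ p) (hpq : p ≤ q) (k : ℕ) :
    q^(k+1) - p^(k+1) ≤ ((k:ℝ)+1) * q^k * (q - p) := by
  induction k with
  | zero => simp
  | succ k ih =>
    have hq : 0 ≤ q := hp.trans hpq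
    have h1 : p^(k+1) ≤ q^(k+1) := pow_le_pow_left₀ hp hpq _
    have h2 : q^(k+1+1) - p^(k+1+1) = q*(q^(k+1) - p^(k+1)) + p^(k+1)*(q-p) := by ring
    have h3 : q*(q^(k+1) - p^(k+1)) ≤ q*(((k:ℝ)+1) * q^k * (q-p)) :=
      mul_le_mul_of_nonneg_left ih hq
    have h4 : p^(k+1)*(q-p) ≤ q^(k+1)*(q-p) :=
      mul_le_mul_of_nonneg_right h1 (by linarith)
    have h5 : q*(((k:ℝ)+1) * q^k * (q-p)) = ((k:ℝ)+1) * q^(k+1) * (q-p) := by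
      rw [pow_succ]; ring
    push_cast
    linarith [h2, h3, h4, h5]

lemma pw_ord (L p₁ p₂ q₁ q₂ : ℝ) (hp1 : 0 ≤ p₁) (hp : p₁ ≤ p₂) (hq1 : 0 ≤ q₁)
    (hq : q₁ ≤ q₂) (hdL : p₂*q₂ ≤ L) (hL0 : 0 < L) (n k : ℕ) :
    0 ≤ (p₁^n*p₂^(n+k+1) - p₁^(n+k+1)*p₂^n) * (q₁^n*q₂^(n+k+1) - q₁^(n+k+1)*q₂^n) ∧
    (p₁^n*p₂^(n+k+1) - p₁^(n+k+1)*p₂^n) * (q₁^n*q₂^(n+k+1) - q₁^(n+k+1)*q₂^n)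
      ≤ ((k:ℝ)+1)^2 * L^(n+(n+k+1)) / L * ((p₂-p₁)*(q₂-q₁)) := by
  have hp2 : 0 ≤ p₂ := hp1.trans hp
  have hq2 : 0 ≤ q₂ := hq1.trans hq
  have e1 : p₁^n*p₂^(n+k+1) - p₁^(n+k+1)*p₂^n = p₁^n*p₂^n*(p₂^(k+1) - p₁^(k+1)) := by
    rw [pow_add, pow_add, pow_add, pow_add]; ring
  have e2 : q₁^n*q₂^(n+k+1) - q₁^(n+k+1)*q₂^n = q₁^n*q₂^n*(q₂^(k+1) - q₁^(k+1)) := by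
    rw [pow_add, pow_add, pow_add, pow_add]; ring
  have hpp : p₁^(k+1) ≤ p₂^(k+1) := pow_le_pow_left₀ hp1 hp _
  have hqq : q₁^(k+1) ≤ q₂^(k+1) := pow_le_pow_left₀ hq1 hq _
  have hx0 : 0 ≤ p₁^n*p₂^(n+k+1) - p₁^(n+k+1)*p₂^n := by
    rw [e1]; exact mul_nonneg (by positivity) (by linarith)
  have hy0 : 0 ≤ q₁^n*q₂^(n+k+1) - q₁^(n+k+1)*q₂^n := by
    rw [e2]; exact mul_nonneg (by positivity) (by linarith)
  refine ⟨mul_nonneg hx0 hy0, ?_⟩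
  have hxle : p₁^n*p₂^(n+k+1) - p₁^(n+k+1)*p₂^n
      ≤ p₁^n*p₂^n*(((k:ℝ)+1) * p₂^k * (p₂-p₁)) := by
    rw [e1]
    exact mul_le_mul_of_nonneg_left (pow_sub_pow_le p₁ p₂ hp1 hp k) (by positivity)
  have hyle : q₁^n*q₂^(n+k+1) - q₁^(n+k+1)*q₂^n
      ≤ q₁^n*q₂^n*(((k:ℝ)+1) * q₂^k * (q₂-q₁)) := by
    rw [e2]
    exact mul_le_mul_of_nonneg_left (pow_sub_pow_le q₁ q₂ hq1 hq k) (by positivity)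
  have step1 : (p₁^n*p₂^(n+k+1) - p₁^(n+k+1)*p₂^n) * (q₁^n*q₂^(n+k+1) - q₁^(n+k+1)*q₂^n)
      ≤ (p₁^n*p₂^n*(((k:ℝ)+1) * p₂^k * (p₂-p₁))) * (q₁^n*q₂^n*(((k:ℝ)+1) * q₂^k * (q₂-q₁))) := by
    apply mul_le_mul hxle hyle hy0
    have : (0:ℝ) ≤ p₂ - p₁ := by linarith
    positivity
  have e3 : (p₁^n*p₂^n*(((k:ℝ)+1) * p₂^k * (p₂-p₁))) * (q₁^n*q₂^n*(((k:ℝ)+1) * q₂^k * (q₂-q₁)))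
      = ((k:ℝ)+1)^2 * ((p₁*q₁)^n * ((p₂*q₂)^n * (p₂*q₂)^k)) * ((p₂-p₁)*(q₂-q₁)) := by
    rw [mul_pow, mul_pow, mul_pow]; ring
  have haL : p₁*q₁ ≤ L := le_trans (mul_le_mul hp hq hq1 hp2) hdL
  have step2 : ((k:ℝ)+1)^2 * ((p₁*q₁)^n * ((p₂*q₂)^n * (p₂*q₂)^k)) * ((p₂-p₁)*(q₂-q₁))
      ≤ ((k:ℝ)+1)^2 * (L^n * (L^n * L^k)) * ((p₂-p₁)*(q₂-q₁)) := by
    have hpq1 : 0 ≤ p₁*q₁ := mul_nonneg hp1 hq1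
    have hpq2 : 0 ≤ p₂*q₂ := mul_nonneg hp2 hq2
    have hd1 : (0:ℝ) ≤ p₂ - p₁ := by linarith
    have hd2 : (0:ℝ) ≤ q₂ - q₁ := by linarith
    gcongr <;> first | exact haL | exact hdL
  have e4 : ((k:ℝ)+1)^2 * (L^n * (L^n * L^k)) * ((p₂-p₁)*(q₂-q₁))
      = ((k:ℝ)+1)^2 * L^(n+(n+k+1)) / L * ((p₂-p₁)*(q₂-q₁)) := by
    rw [show n+(n+k+1) = (n+(n+k))+1 by omega, pow_succ, pow_add, pow_add]
    field_simp
    ring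
  calc (p₁^n*p₂^(n+k+1) - p₁^(n+k+1)*p₂^n) * (q₁^n*q₂^(n+k+1) - q₁^(n+k+1)*q₂^n)
      ≤ (p₁^n*p₂^n*(((k:ℝ)+1) * p₂^k * (p₂-p₁))) * (q₁^n*q₂^n*(((k:ℝ)+1) * q₂^k * (q₂-q₁))) := step1
    _ = ((k:ℝ)+1)^2 * ((p₁*q₁)^n * ((p₂*q₂)^n * (p₂*q₂)^k)) * ((p₂-p₁)*(q₂-q₁)) := e3
    _ ≤ ((k:ℝ)+1)^2 * (L^n * (L^n * L^k)) * ((p₂-p₁)*(q₂-q₁)) := step2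
    _ = ((k:ℝ)+1)^2 * L^(n+(n+k+1)) / L * ((p₂-p₁)*(q₂-q₁)) := e4

lemma pw (L X₁ X₂ Y₁ Y₂ : ℝ) (hX1 : 0 ≤ X₁) (hX : X₁ ≤ X₂) (hY1 : 0 ≤ Y₁)
    (hY : Y₁ ≤ Y₂) (hdL : X₂*Y₂ ≤ L) (hL0 : 0 < L) (n m : ℕ) :
    0 ≤ (X₁^n*X₂^m - X₁^m*X₂^n) * (Y₁^n*Y₂^m - Y₁^m*Y₂^n) ∧
    (X₁^n*X₂^m - X₁^m*X₂^n) * (Y₁^n*Y₂^m - Y₁^m*Y₂^n)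
      ≤ ((n:ℝ)-(m:ℝ))^2 * L^(n+m) / L * ((X₂-X₁)*(Y₂-Y₁)) := by
  rcases lt_trichotomy n m with h | h | h
  · obtain ⟨k, rfl⟩ : ∃ k, m = n+k+1 := ⟨m-n-1, by omega⟩
    have h0 := pw_ord L X₁ X₂ Y₁ Y₂ hX1 hX hY1 hY hdL hL0 n k
    have e : ((n:ℝ)-((n+k+1:ℕ):ℝ))^2 = ((k:ℝ)+1)^2 := by push_cast; ring
    rw [e]
    exact h0
  · subst h
    constructor
    · have : X₁^n*X₂^n - X₁^n*X₂^n = 0 := by ring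
      rw [this]; simp
    · have e1 : (X₁^n*X₂^n - X₁^n*X₂^n) * (Y₁^n*Y₂^n - Y₁^n*Y₂^n) = 0 := by ring
      have e2 : ((n:ℝ)-(n:ℝ))^2 * L^(n+n) / L * ((X₂-X₁)*(Y₂-Y₁)) = 0 := by
        rw [sub_self]; ring
      rw [e1, e2]
  · obtain ⟨k, rfl⟩ : ∃ k, n = m+k+1 := ⟨n-m-1, by omega⟩
    have h0 := pw_ord L X₁ X₂ Y₁ Y₂ hX1 hX hY1 hY hdL hL0 m k
    have e : (((m+k+1:ℕ):ℝ)-(m:ℝ))^2 = ((k:ℝ)+1)^2 := by push_cast; ring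
    have e5 : (X₁^(m+k+1)*X₂^m - X₁^m*X₂^(m+k+1)) * (Y₁^(m+k+1)*Y₂^m - Y₁^m*Y₂^(m+k+1))
        = (X₁^m*X₂^(m+k+1) - X₁^(m+k+1)*X₂^m) * (Y₁^m*Y₂^(m+k+1) - Y₁^(m+k+1)*Y₂^m) := by
      ring
    have e6 : (m+k+1)+m = m+(m+k+1) := by omega
    rw [e5, e, e6]
    exact h0

noncomputable def AA (α X₁ X₂ Y₁ Y₂ : ℝ) (p : ℕ×ℕ) : ℝ :=
  (cc α p.1 * (X₁*Y₁)^p.1) * (cc α p.2 * (X₂*Y₂)^p.2)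

noncomputable def BB (α X₁ X₂ Y₁ Y₂ : ℝ) (p : ℕ×ℕ) : ℝ :=
  (cc α p.1 * (X₁*Y₂)^p.1) * (cc α p.2 * (X₂*Y₁)^p.2)

noncomputable def FF (α X₁ X₂ Y₁ Y₂ : ℝ) (p : ℕ×ℕ) : ℝ :=
  cc α p.1 * cc α p.2 *
    ((X₁^p.1*X₂^p.2 - X₁^p.2*X₂^p.1) * (Y₁^p.1*Y₂^p.2 - Y₁^p.2*Y₂^p.1))

noncomputable def WW (α L : ℝ) (p : ℕ×ℕ) : ℝ :=
  2*((((p.1:ℝ))^2*(cc α p.1 * L^p.1)) * (cc α p.2 * L^p.2)) +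
  2*((cc α p.1 * L^p.1) * (((p.2:ℝ))^2*(cc α p.2 * L^p.2)))

noncomputable def MM (α L : ℝ) : ℝ := ∑' p : ℕ×ℕ, WW α L p

lemma summable_WW (α L : ℝ) (hα : 0 ≤ α) (hL : 0 < L) : Summable (WW α L) := by
  have s1 : Summable (fun p : ℕ×ℕ =>
      (((p.1:ℝ))^2*(cc α p.1 * L^p.1)) * (cc α p.2 * L^p.2)) :=
    Summable.mul_of_nonneg (f := fun n : ℕ => ((n:ℝ))^2*(cc α n * L^n))
      (g := fun m : ℕ => cc α m * L^m)
      (summable_sq α hα L hL.le) (summable_gg α hα L hL.le)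
      (fun n => by have := cc_pos α hα n; positivity)
      (fun n => by have := cc_pos α hα n; positivity)
  have s2 : Summable (fun p : ℕ×ℕ =>
      (cc α p.1 * L^p.1) * (((p.2:ℝ))^2*(cc α p.2 * L^p.2))) :=
    Summable.mul_of_nonneg (f := fun n : ℕ => cc α n * L^n)
      (g := fun m : ℕ => ((m:ℝ))^2*(cc α m * L^m))
      (summable_gg α hα L hL.le) (summable_sq α hα L hL.le)
      (fun n => by have := cc_pos α hα n; positivity)
      (fun n => by have := cc_pos α hα n; positivity)
  exact (s1.mul_left 2).add (s2.mul_left 2)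

set_option maxHeartbeats 2000000 in
lemma core (α L : ℝ) (hα : 0 ≤ α) (hL : 0 < L) (X₁ X₂ Y₁ Y₂ : ℝ)
    (hX1 : 0 ≤ X₁) (hX : X₁ ≤ X₂) (hY1 : 0 ≤ Y₁) (hY : Y₁ ≤ Y₂) (hdL : X₂*Y₂ ≤ L) :
    cc α 0 * cc α 1 * ((X₂-X₁)*(Y₂-Y₁))
        ≤ 2*(gg α (X₁*Y₁) * gg α (X₂*Y₂) - gg α (X₁*Y₂) * gg α (X₂*Y₁))
    ∧ 2*(gg α (X₁*Y₁) * gg α (X₂*Y₂) - gg α (X₁*Y₂) * gg α (X₂*Y₁))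
        ≤ MM α L / L * ((X₂-X₁)*(Y₂-Y₁)) := by
  have hX2 : 0 ≤ X₂ := hX1.trans hX
  have hY2 : 0 ≤ Y₂ := hY1.trans hY
  have ha0 : 0 ≤ X₁*Y₁ := mul_nonneg hX1 hY1
  have hb0 : 0 ≤ X₁*Y₂ := mul_nonneg hX1 hY2
  have hc0 : 0 ≤ X₂*Y₁ := mul_nonneg hX2 hY1
  have hd0 : 0 ≤ X₂*Y₂ := mul_nonneg hX2 hY2
  have ccnn : ∀ n : ℕ, 0 ≤ cc α n := fun n => (cc_pos α hα n).le
  have sA : Summable (AA α X₁ X₂ Y₁ Y₂) :=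
    Summable.mul_of_nonneg (f := fun n : ℕ => cc α n * (X₁*Y₁)^n)
      (g := fun m : ℕ => cc α m * (X₂*Y₂)^m)
      (summable_gg α hα _ ha0) (summable_gg α hα _ hd0)
      (fun n => by have := ccnn n; positivity) (fun n => by have := ccnn n; positivity)
  have sB : Summable (BB α X₁ X₂ Y₁ Y₂) :=
    Summable.mul_of_nonneg (f := fun n : ℕ => cc α n * (X₁*Y₂)^n)
      (g := fun m : ℕ => cc α m * (X₂*Y₁)^m)
      (summable_gg α hα _ hb0) (summable_gg α hα _ hc0)
      (fun n => by have := ccnn n; positivity) (fun n => by have := ccnn n; positivity)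
  have h1 : gg α (X₁*Y₁) * gg α (X₂*Y₂) = ∑' p : ℕ×ℕ, AA α X₁ X₂ Y₁ Y₂ p :=
    Summable.tsum_mul_tsum (summable_gg α hα _ ha0) (summable_gg α hα _ hd0) sA
  have h2 : gg α (X₁*Y₂) * gg α (X₂*Y₁) = ∑' p : ℕ×ℕ, BB α X₁ X₂ Y₁ Y₂ p :=
    Summable.tsum_mul_tsum (summable_gg α hα _ hb0) (summable_gg α hα _ hc0) sB
  have sT : Summable (fun p : ℕ×ℕ => AA α X₁ X₂ Y₁ Y₂ p - BB α X₁ X₂ Y₁ Y₂ p) := sA.sub sB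
  have hT : gg α (X₁*Y₁) * gg α (X₂*Y₂) - gg α (X₁*Y₂) * gg α (X₂*Y₁)
      = ∑' p : ℕ×ℕ, (AA α X₁ X₂ Y₁ Y₂ p - BB α X₁ X₂ Y₁ Y₂ p) := by
    rw [h1, h2, Summable.tsum_sub sA sB]
  have sTswap : Summable (fun p : ℕ×ℕ =>
      AA α X₁ X₂ Y₁ Y₂ p.swap - BB α X₁ X₂ Y₁ Y₂ p.swap) :=
    ((Equiv.prodComm ℕ ℕ).summable_iff).mpr sT
  have hswap : (∑' p : ℕ×ℕ, (AA α X₁ X₂ Y₁ Y₂ p - BB α X₁ X₂ Y₁ Y₂ p))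
      = ∑' p : ℕ×ℕ, (AA α X₁ X₂ Y₁ Y₂ p.swap - BB α X₁ X₂ Y₁ Y₂ p.swap) :=
    ((Equiv.prodComm ℕ ℕ).tsum_eq (fun p => AA α X₁ X₂ Y₁ Y₂ p - BB α X₁ X₂ Y₁ Y₂ p)).symm
  have hFeq : ∀ p : ℕ×ℕ, (AA α X₁ X₂ Y₁ Y₂ p - BB α X₁ X₂ Y₁ Y₂ p)
      + (AA α X₁ X₂ Y₁ Y₂ p.swap - BB α X₁ X₂ Y₁ Y₂ p.swap) = FF α X₁ X₂ Y₁ Y₂ p := by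
    rintro ⟨n, m⟩
    simp only [AA, BB, FF, Prod.swap, Prod.fst, Prod.snd]
    rw [mul_pow, mul_pow, mul_pow, mul_pow, mul_pow, mul_pow, mul_pow, mul_pow]
    ring
  have sF : Summable (FF α X₁ X₂ Y₁ Y₂) := by
    have := sT.add sTswap
    exact this.congr hFeq
  have h2S : 2*(gg α (X₁*Y₁) * gg α (X₂*Y₂) - gg α (X₁*Y₂) * gg α (X₂*Y₁))
      = ∑' p : ℕ×ℕ, FF α X₁ X₂ Y₁ Y₂ p := by
    rw [hT, two_mul]
    nth_rewrite 2 [hswap]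
    rw [← Summable.tsum_add sT sTswap]
    exact tsum_congr hFeq
  have hFnn : ∀ p : ℕ×ℕ, 0 ≤ FF α X₁ X₂ Y₁ Y₂ p := by
    rintro ⟨n, m⟩
    have := (pw L X₁ X₂ Y₁ Y₂ hX1 hX hY1 hY hdL hL n m).1
    simp only [FF]
    have h := mul_nonneg (mul_nonneg (ccnn n) (ccnn m)) this
    exact h
  constructor
  · rw [h2S]
    have hsingle := Summable.sum_le_tsum ({((0:ℕ),(1:ℕ))} : Finset (ℕ×ℕ))
      (fun p _ => hFnn p) sF
    have hval : ∑ p ∈ ({((0:ℕ),(1:ℕ))} : Finset (ℕ×ℕ)), FF α X₁ X₂ Y₁ Y₂ p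
        = cc α 0 * cc α 1 * ((X₂-X₁)*(Y₂-Y₁)) := by
      rw [Finset.sum_singleton]
      simp only [FF]
      norm_num
    rw [hval] at hsingle
    exact hsingle
  · rw [h2S]
    have hle : ∀ p : ℕ×ℕ, FF α X₁ X₂ Y₁ Y₂ p ≤ WW α L p / L * ((X₂-X₁)*(Y₂-Y₁)) := by
      rintro ⟨n, m⟩
      have hpw := (pw L X₁ X₂ Y₁ Y₂ hX1 hX hY1 hY hdL hL n m).2
      have hcc : 0 ≤ cc α n * cc α m := mul_nonneg (ccnn n) (ccnn m)
      have step : FF α X₁ X₂ Y₁ Y₂ (n, m)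
          ≤ cc α n * cc α m * (((n:ℝ)-(m:ℝ))^2 * L^(n+m) / L * ((X₂-X₁)*(Y₂-Y₁))) := by
        simp only [FF]
        exact mul_le_mul_of_nonneg_left hpw hcc
      refine step.trans ?_
      have key : ((n:ℝ)-(m:ℝ))^2 ≤ 2*((n:ℝ))^2 + 2*((m:ℝ))^2 := by
        linarith [sq_nonneg ((n:ℝ)+(m:ℝ)), sq_nonneg ((n:ℝ)-(m:ℝ))]
      have hLnm : (0:ℝ) ≤ L^n * L^m := by positivity
      have main : cc α n * cc α m * (((n:ℝ)-(m:ℝ))^2 * L^(n+m))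
          ≤ WW α L (n, m) := by
        have h7 := mul_le_mul_of_nonneg_left key (mul_nonneg hcc hLnm)
        calc cc α n * cc α m * (((n:ℝ)-(m:ℝ))^2 * L^(n+m))
            = cc α n * cc α m * (L^n * L^m) * ((n:ℝ)-(m:ℝ))^2 := by
              rw [pow_add]; ring
          _ ≤ cc α n * cc α m * (L^n * L^m) * (2*((n:ℝ))^2 + 2*((m:ℝ))^2) := h7
          _ = WW α L (n, m) := by simp only [WW]; ring
      have hΔ : (0:ℝ) ≤ (X₂-X₁)*(Y₂-Y₁) :=
        mul_nonneg (by linarith) (by linarith)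
      calc cc α n * cc α m * (((n:ℝ)-(m:ℝ))^2 * L^(n+m) / L * ((X₂-X₁)*(Y₂-Y₁)))
          = (cc α n * cc α m * (((n:ℝ)-(m:ℝ))^2 * L^(n+m))) / L * ((X₂-X₁)*(Y₂-Y₁)) := by
            ring
        _ ≤ WW α L (n, m) / L * ((X₂-X₁)*(Y₂-Y₁)) := by
            apply mul_le_mul_of_nonneg_right _ hΔ
            exact div_le_div_of_nonneg_right main hL.le
    have sRHS : Summable (fun p : ℕ×ℕ => WW α L p / L * ((X₂-X₁)*(Y₂-Y₁))) :=
      ((summable_WW α L hα hL).div_const L).mul_right _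
    have := Summable.tsum_le_tsum hle sF sRHS
    refine this.trans ?_
    rw [tsum_mul_right, tsum_div_const]
    rfl

lemma MM_nonneg (α L : ℝ) (hα : 0 ≤ α) (hL : 0 < L) : 0 ≤ MM α L := by
  apply tsum_nonneg
  rintro ⟨n, m⟩
  have h1 := cc_pos α hα n
  have h2 := cc_pos α hα m
  simp only [WW]
  positivity


set_option maxHeartbeats 2000000 in
/-- For `α ≥ 0` and `L > 0` there is `C = C(α,L) > 0` such that for all
`x₂ ≥ x₁ ≥ 0`, `y₂ ≥ y₁ ≥ 0` and `t > 0` with `x₂ y₂ ≤ L t²`, the `2×2`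
determinant `q_t(x₁,y₁)q_t(x₂,y₂) − q_t(x₁,y₂)q_t(x₂,y₁)` is comparable to
`t⁻² q_t(x₁,y₂) q_t(x₂,y₁)(x₂−x₁)(y₂−y₁)` within factor `C`. -/
theorem stmt6 (α L : ℝ) (hα : 0 ≤ α) (hL : 0 < L) :
    ∃ C > 0, ∀ x₁ x₂ y₁ y₂ t : ℝ,
      0 ≤ x₁ → x₁ ≤ x₂ → 0 ≤ y₁ → y₁ ≤ y₂ → 0 < t → x₂ * y₂ ≤ L * t ^ 2 →
      (C⁻¹ * (qK α t x₁ y₂ * qK α t x₂ y₁ * (x₂ - x₁) * (y₂ - y₁)) / t ^ 2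
          ≤ qK α t x₁ y₁ * qK α t x₂ y₂ - qK α t x₁ y₂ * qK α t x₂ y₁)
        ∧ qK α t x₁ y₁ * qK α t x₂ y₂ - qK α t x₁ y₂ * qK α t x₂ y₁
          ≤ C * (qK α t x₁ y₂ * qK α t x₂ y₁ * (x₂ - x₁) * (y₂ - y₁)) / t ^ 2 := by
  have hc0 := cc_pos α hα 0
  have hc1 := cc_pos α hα 1
  have hgL := gg_pos α hα L hL.le
  have hMM := MM_nonneg α L hα hL
  set gL := gg α L with hgLdef
  refine ⟨2*gL*gL/(cc α 0 * cc α 1) + MM α L/(2*L*(cc α 0)^2) + 1, by positivity, ?_⟩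
  set C := 2*gL*gL/(cc α 0 * cc α 1) + MM α L/(2*L*(cc α 0)^2) + 1 with hCdef
  have hCpos : 0 < C := by rw [hCdef]; positivity
  intro x₁ x₂ y₁ y₂ t hx1 hx hy1 hy ht hxyL
  have hx2 : 0 ≤ x₂ := hx1.trans hx
  have hy2 : 0 ≤ y₂ := hy1.trans hy
  have hX1 : 0 ≤ x₁/t := by positivity
  have hY1 : 0 ≤ y₁/t := by positivity
  have hXle : x₁/t ≤ x₂/t := div_le_div_of_nonneg_right hx ht.le  -- maybe wrong name
  have hYle : y₁/t ≤ y₂/t := div_le_div_of_nonneg_right hy ht.le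
  have hX2 : 0 ≤ x₂/t := hX1.trans hXle
  have hY2 : 0 ≤ y₂/t := hY1.trans hYle
  have hdL : (x₂/t)*(y₂/t) ≤ L := by
    rw [div_mul_div_comm, div_le_iff₀ (by positivity)]
    calc x₂*y₂ ≤ L*t^2 := hxyL
      _ = L*(t*t) := by ring
  obtain ⟨cl, cu⟩ := core α L hα hL (x₁/t) (x₂/t) (y₁/t) (y₂/t) hX1 hXle hY1 hYle hdL
  set ga := gg α ((x₁/t)*(y₁/t)) with hga
  set gb := gg α ((x₁/t)*(y₂/t)) with hgb
  set gc := gg α ((x₂/t)*(y₁/t)) with hgc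
  set gd := gg α ((x₂/t)*(y₂/t)) with hgd
  set Δ := ((x₂/t)-(x₁/t))*((y₂/t)-(y₁/t)) with hΔ
  have hΔ0 : 0 ≤ Δ := by rw [hΔ]; exact mul_nonneg (by linarith) (by linarith)
  have hgb0 : 0 < gb := gg_pos α hα _ (mul_nonneg hX1 hY2)
  have hgc0 : 0 < gc := gg_pos α hα _ (mul_nonneg hX2 hY1)
  have hgbL : gb ≤ gL := gg_mono α hα (mul_nonneg hX1 hY2)
    (le_trans (mul_le_mul hXle le_rfl hY2 hX2) hdL)
  have hgcL : gc ≤ gL := gg_mono α hα (mul_nonneg hX2 hY1)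
    (le_trans (mul_le_mul le_rfl hYle hY1 hX2) hdL)
  have hgbc0 : cc α 0 ≤ gb := gg_ge_c0 α hα _ (mul_nonneg hX1 hY2)
  have hgcc0 : cc α 0 ≤ gc := gg_ge_c0 α hα _ (mul_nonneg hX2 hY1)
  -- product identities
  set Q := ((1/2)*t^(-α-1))^2 * (y₁^α * y₂^α) *
    (Real.exp (-(x₁+y₁)/(2*t)) * Real.exp (-(x₂+y₂)/(2*t))) * ((2:ℝ)^(-α))^2 with hQdef
  have hQ : 0 ≤ Q := by
    have e1 : (0:ℝ) ≤ y₁^α := Real.rpow_nonneg hy1 α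
    have e2 : (0:ℝ) ≤ y₂^α := Real.rpow_nonneg hy2 α
    have e3 : (0:ℝ) < Real.exp (-(x₁+y₁)/(2*t)) := Real.exp_pos _
    have e4 : (0:ℝ) < Real.exp (-(x₂+y₂)/(2*t)) := Real.exp_pos _
    positivity
  have hexp : Real.exp (-(x₁+y₂)/(2*t)) * Real.exp (-(x₂+y₁)/(2*t))
      = Real.exp (-(x₁+y₁)/(2*t)) * Real.exp (-(x₂+y₂)/(2*t)) := by
    rw [← Real.exp_add, ← Real.exp_add]
    congr 1
    ring
  have hprod1 : qK α t x₁ y₁ * qK α t x₂ y₂ = Q * (ga * gd) := by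
    rw [qK_eq α t x₁ y₁ hx1 hy1 ht, qK_eq α t x₂ y₂ hx2 hy2 ht, hQdef, hga, hgd]
    ring
  have hprod2 : qK α t x₁ y₂ * qK α t x₂ y₁ = Q * (gb * gc) := by
    rw [qK_eq α t x₁ y₂ hx1 hy2 ht, qK_eq α t x₂ y₁ hx2 hy1 ht, hQdef, hgb, hgc]
    linear_combination (((1/2)*t^(-α-1))^2 * (y₁^α * y₂^α) * ((2:ℝ)^(-α))^2 * gb * gc) * hexp
  clear_value gL C ga gb gc gd Δ Q
  -- middle inequalities
  have hCc : 2*gL*gL ≤ C*(cc α 0 * cc α 1) := by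
    have h9 : 2*gL*gL/(cc α 0 * cc α 1) ≤ C := by
      rw [hCdef]
      have : (0:ℝ) ≤ MM α L/(2*L*(cc α 0)^2) := by positivity
      linarith
    rw [div_le_iff₀ (by positivity)] at h9
    linarith
  have h8 : C⁻¹*(gb*gc) ≤ cc α 0 * cc α 1/2 := by
    have hbb : gb*gc ≤ gL*gL := mul_le_mul hgbL hgcL hgc0.le hgL.le
    have s1 : C⁻¹*(gb*gc) ≤ C⁻¹*(gL*gL) :=
      mul_le_mul_of_nonneg_left hbb (by positivity)
    refine s1.trans ?_
    rw [inv_mul_le_iff₀ hCpos]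
    calc gL*gL = (2*gL*gL)/2 := by ring
      _ ≤ (C*(cc α 0 * cc α 1))/2 := div_le_div_of_nonneg_right hCc (by norm_num)
      _ = C*(cc α 0 * cc α 1/2) := by ring
  have hmidl : C⁻¹*((gb*gc)*Δ) ≤ ga*gd - gb*gc := by
    have s2 : C⁻¹*((gb*gc)*Δ) = (C⁻¹*(gb*gc))*Δ := by ring
    rw [s2]
    have s3 : (C⁻¹*(gb*gc))*Δ ≤ (cc α 0 * cc α 1/2)*Δ :=
      mul_le_mul_of_nonneg_right h8 hΔ0
    refine s3.trans ?_
    have e : (cc α 0 * cc α 1/2)*Δ = (cc α 0 * cc α 1*Δ)/2 := by ring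
    rw [e]
    linarith [cl]
  have hmidu : ga*gd - gb*gc ≤ C*((gb*gc)*Δ) := by
    have s4 : MM α L/L ≤ C*(gb*gc)*2 := by
      have hgg : (cc α 0)^2 ≤ gb*gc := by
        rw [sq]
        exact mul_le_mul hgbc0 hgcc0 hc0.le (hc0.le.trans hgbc0)
      have s5 : MM α L/(2*L*(cc α 0)^2) ≤ C := by
        rw [hCdef]
        have : (0:ℝ) ≤ 2*gL*gL/(cc α 0 * cc α 1) := by positivity
        linarith
      rw [div_le_iff₀ (by positivity)] at s5
      have s6 : C*(cc α 0)^2 ≤ C*(gb*gc) := mul_le_mul_of_nonneg_left hgg hCpos.le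
      rw [div_le_iff₀ hL]
      have s6b : C*(cc α 0)^2*(2*L) ≤ C*(gb*gc)*(2*L) :=
        mul_le_mul_of_nonneg_right s6 (by positivity)
      linarith [s5, s6b]
    have s7 : MM α L/L*Δ ≤ C*(gb*gc)*2*Δ := mul_le_mul_of_nonneg_right s4 hΔ0
    linarith [cu, s7]
  constructor
  · rw [hprod1, hprod2]
    calc C⁻¹ * (Q * (gb*gc) * (x₂-x₁) * (y₂-y₁)) / t^2 = Q * (C⁻¹*((gb*gc)*Δ)) := by
          rw [hΔ]
          field_simp
      _ ≤ Q * (ga*gd - gb*gc) := mul_le_mul_of_nonneg_left hmidl hQ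
      _ = Q * (ga*gd) - Q * (gb*gc) := by ring
  · rw [hprod1, hprod2]
    calc Q * (ga*gd) - Q * (gb*gc) = Q * (ga*gd - gb*gc) := by ring
      _ ≤ Q * (C*((gb*gc)*Δ)) := mul_le_mul_of_nonneg_left hmidu hQ
      _ = C * (Q * (gb*gc) * (x₂-x₁) * (y₂-y₁)) / t^2 := by
          rw [hΔ]
          field_simp
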